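/- Let n ≥ 2 and let G be a simple graph on Fin n. The set Σ(G) = {σ : Perm (Fin n) | M_σ '' S(G) = S(G)} is a subgroup of the symmetric group on Fin n, and the automorphism group of G is isomorphic to this subgroup; in particular the number of automorphisms of G equals the cardinality of Σ(G) (the order of the symmetry group of the point-set form). -/

import Mathlib

set_option linter.unreachableTactic false
set_option linter.unusedTactic false
set_option linter.unusedVariables false

/-- The centered standard simplex vertices: `s i = e_i - (1/n) • ∑ j, e_j`,
where `e_i` is the standard basis of `EuclideanSpace ℝ (Fin n)`. -/
noncomputable def simplexPt (n : ℕ) (i : Fin n) : EuclideanSpace ℝ (Fin n) :=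
  EuclideanSpace.single i (1 : ℝ) - ((1 : ℝ) / n) • ∑ j, EuclideanSpace.single j (1 : ℝ)

/-- The coordinate-permutation map `M_σ` (the permutation matrix of `σ`), as a linear
isometry equivalence of `EuclideanSpace ℝ (Fin n)`. -/
noncomputable def Mperm (n : ℕ) (σ : Equiv.Perm (Fin n)) :
    EuclideanSpace ℝ (Fin n) ≃ₗᵢ[ℝ] EuclideanSpace ℝ (Fin n) :=
  LinearIsometryEquiv.piLpCongrLeft 2 ℝ ℝ σ

/-- The point-set form of a simple graph `G` on `Fin n`:
`S(G) = {s i : i} ∪ {(s i + s j)/2 : G.Adj i j}`. -/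
noncomputable def pointSet (n : ℕ) (G : SimpleGraph (Fin n)) :
    Set (EuclideanSpace ℝ (Fin n)) :=
  Set.range (simplexPt n) ∪
    {p | ∃ i j : Fin n, G.Adj i j ∧ p = (2 : ℝ)⁻¹ • (simplexPt n i + simplexPt n j)}

lemma sum_single_apply (n : ℕ) (k : Fin n) :
    (∑ j, EuclideanSpace.single j (1 : ℝ)) k = 1 := by
  have : (∑ j, EuclideanSpace.single j (1 : ℝ)) k
      = ∑ j, (EuclideanSpace.single j (1 : ℝ)) k :=
    by rw [WithLp.ofLp_sum]; exact Finset.sum_apply k Finset.univ _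
  rw [this]; simp [EuclideanSpace.single_apply]

lemma simplexPt_apply (n : ℕ) (i k : Fin n) :
    simplexPt n i k = (if k = i then 1 else 0) - 1 / n := by
  simp [simplexPt, EuclideanSpace.single_apply, sum_single_apply]

lemma mid_apply (n : ℕ) (i j k : Fin n) :
    ((2 : ℝ)⁻¹ • (simplexPt n i + simplexPt n j)) k
      = (2 : ℝ)⁻¹ * ((if k = i then 1 else 0) + (if k = j then 1 else 0)) - 1 / n := by
  have : ((2 : ℝ)⁻¹ • (simplexPt n i + simplexPt n j)) k
      = (2 : ℝ)⁻¹ * (simplexPt n i k + simplexPt n j k) := rfl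
  rw [this, simplexPt_apply, simplexPt_apply]; ring

lemma Mperm_simplexPt (n : ℕ) (σ : Equiv.Perm (Fin n)) (i : Fin n) :
    Mperm n σ (simplexPt n i) = simplexPt n (σ i) := by
  unfold Mperm simplexPt
  rw [map_sub, map_smul, map_sum]
  congr 1
  · exact EuclideanSpace.piLpCongrLeft_single σ i 1
  · congr 1
    simp_rw [EuclideanSpace.piLpCongrLeft_single]
    exact Equiv.sum_comp σ fun j => EuclideanSpace.single j (1 : ℝ)

lemma Mperm_mid (n : ℕ) (σ : Equiv.Perm (Fin n)) (i j : Fin n) :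
    Mperm n σ ((2 : ℝ)⁻¹ • (simplexPt n i + simplexPt n j))
      = (2 : ℝ)⁻¹ • (simplexPt n (σ i) + simplexPt n (σ j)) := by
  rw [map_smul, map_add, Mperm_simplexPt, Mperm_simplexPt]

lemma vertex_ne_mid (n : ℕ) (i j k : Fin n) (hij : i ≠ j) :
    simplexPt n k ≠ (2 : ℝ)⁻¹ • (simplexPt n i + simplexPt n j) := by
  intro h
  have hk : simplexPt n k k = ((2 : ℝ)⁻¹ • (simplexPt n i + simplexPt n j)) k := by rw [h]
  rw [simplexPt_apply, mid_apply] at hk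
  simp only [if_pos rfl, sub_left_inj] at hk
  rcases eq_or_ne k i with rfl | hki <;> rcases eq_or_ne k j with rfl | hkj <;>
    simp_all <;> norm_num at hk

lemma mid_coord_mem (n : ℕ) {i j k l : Fin n} (hkl : k ≠ l)
    (h : (2 : ℝ)⁻¹ • (simplexPt n i + simplexPt n j) = (2 : ℝ)⁻¹ • (simplexPt n k + simplexPt n l))
    (hij : i ≠ j) : i = k ∨ i = l := by
  have hi : ((2 : ℝ)⁻¹ • (simplexPt n i + simplexPt n j)) i
      = ((2 : ℝ)⁻¹ • (simplexPt n k + simplexPt n l)) i := by rw [h]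
  rw [mid_apply, mid_apply] at hi
  simp only [if_pos rfl, if_neg hij, sub_left_inj] at hi
  by_contra hc
  push_neg at hc
  rw [if_neg hc.1, if_neg hc.2] at hi
  norm_num at hi

lemma mid_eq (n : ℕ) {i j k l : Fin n} (hij : i ≠ j) (hkl : k ≠ l)
    (h : (2 : ℝ)⁻¹ • (simplexPt n i + simplexPt n j) = (2 : ℝ)⁻¹ • (simplexPt n k + simplexPt n l)) :
    (i = k ∧ j = l) ∨ (i = l ∧ j = k) := by
  have h' : (2 : ℝ)⁻¹ • (simplexPt n j + simplexPt n i)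
      = (2 : ℝ)⁻¹ • (simplexPt n k + simplexPt n l) := by rw [← h]; rw [add_comm]
  have hi := mid_coord_mem n hkl h hij
  have hj := mid_coord_mem n hkl h' (Ne.symm hij)
  rcases hi with rfl | rfl <;> rcases hj with rfl | rfl
  · exact absurd rfl hij
  · exact Or.inl ⟨rfl, rfl⟩
  · exact Or.inr ⟨rfl, rfl⟩
  · exact absurd rfl hij

lemma cond_iff (n : ℕ) (G : SimpleGraph (Fin n)) (σ : Equiv.Perm (Fin n)) :
    Mperm n σ '' pointSet n G = pointSet n G ↔
      ∀ i j, G.Adj i j ↔ G.Adj (σ i) (σ j) := by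
  constructor
  · intro h i j
    constructor
    · intro hij
      have hmem : (2 : ℝ)⁻¹ • (simplexPt n (σ i) + simplexPt n (σ j)) ∈ pointSet n G := by
        rw [← h]
        exact ⟨_, Or.inr ⟨i, j, hij, rfl⟩, Mperm_mid n σ i j⟩
      rcases hmem with ⟨k, hk⟩ | ⟨k, l, hkl, hkl'⟩
      · exact absurd hk (vertex_ne_mid n (σ i) (σ j) k (fun e => G.ne_of_adj hij (σ.injective e)))
      · rcases mid_eq n (fun e => G.ne_of_adj hij (σ.injective e)) (G.ne_of_adj hkl) hkl' with
          ⟨rfl, rfl⟩ | ⟨rfl, rfl⟩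
        · exact hkl
        · exact hkl.symm
    · intro hσ
      have hmem : (2 : ℝ)⁻¹ • (simplexPt n (σ i) + simplexPt n (σ j)) ∈
          Mperm n σ '' pointSet n G := by
        rw [h]; exact Or.inr ⟨σ i, σ j, hσ, rfl⟩
      rcases hmem with ⟨p, hp, hpe⟩
      rcases hp with ⟨k, hk⟩ | ⟨k, l, hkl, rfl⟩
      · rw [← hk, Mperm_simplexPt] at hpe
        exact absurd hpe (vertex_ne_mid n (σ i) (σ j) (σ k) (G.ne_of_adj hσ))
      · rw [Mperm_mid] at hpe
        rcases mid_eq n (fun e => G.ne_of_adj hkl (σ.injective e))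
            (G.ne_of_adj hσ) hpe with ⟨hk, hl⟩ | ⟨hk, hl⟩
        · rwa [σ.injective hk, σ.injective hl] at hkl
        · rw [σ.injective hk, σ.injective hl] at hkl
          exact hkl.symm
  · intro h
    apply Set.eq_of_subset_of_subset
    · rintro p ⟨q, hq | ⟨i, j, hij, rfl⟩, rfl⟩
      · rcases hq with ⟨i, rfl⟩
        exact Or.inl ⟨σ i, (Mperm_simplexPt n σ i).symm ▸ rfl⟩
      · exact Or.inr ⟨σ i, σ j, (h i j).1 hij, (Mperm_mid n σ i j)⟩
    · rintro p (⟨i, rfl⟩ | ⟨i, j, hij, rfl⟩)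
      · exact ⟨simplexPt n (σ⁻¹ i), Or.inl ⟨σ⁻¹ i, rfl⟩, by
          rw [Mperm_simplexPt]; simp⟩
      · refine ⟨(2 : ℝ)⁻¹ • (simplexPt n (σ⁻¹ i) + simplexPt n (σ⁻¹ j)),
          Or.inr ⟨σ⁻¹ i, σ⁻¹ j, ?_, rfl⟩, by rw [Mperm_mid]; simp⟩
        have := (h (σ⁻¹ i) (σ⁻¹ j)).2
        simp at this
        exact this hij

/-- The symmetry group `Σ(G)` of the point-set form, as a subgroup of `Perm (Fin n)`. -/
def symSubgroup (n : ℕ) (G : SimpleGraph (Fin n)) : Subgroup (Equiv.Perm (Fin n)) where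
  carrier := {σ | Mperm n σ '' pointSet n G = pointSet n G}
  mul_mem' := by
    intro a b ha hb
    rw [Set.mem_setOf_eq, cond_iff] at *
    intro i j
    exact (hb i j).trans (ha (b i) (b j))
  one_mem' := by
    show Mperm n 1 '' pointSet n G = pointSet n G
    rw [cond_iff]; intro i j; rfl
  inv_mem' := by
    intro a ha
    rw [Set.mem_setOf_eq, cond_iff] at *
    intro i j
    have := ha (a⁻¹ i) (a⁻¹ j)
    simp at this
    exact this.symm

/-- The automorphism group of `G` is isomorphic to the symmetry group of the point set. -/
noncomputable def autMulEquiv (n : ℕ) (G : SimpleGraph (Fin n)) :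
    (G ≃g G) ≃* symSubgroup n G where
  toFun := fun φ => ⟨φ.toEquiv, (cond_iff n G φ.toEquiv).2 fun i j => φ.map_rel_iff.symm⟩
  invFun := fun σ => ⟨σ.1, fun {i j} => (((cond_iff n G σ.1).1 σ.2) i j).symm⟩
  left_inv := fun φ => rfl
  right_inv := fun σ => rfl
  map_mul' := fun φ ψ => rfl

theorem symmetry_group_of_pointSet
    (n : ℕ) (hn : 2 ≤ n) (G : SimpleGraph (Fin n)) :
    ∃ H : Subgroup (Equiv.Perm (Fin n)),
      (H : Set (Equiv.Perm (Fin n))) = {σ | Mperm n σ '' pointSet n G = pointSet n G} ∧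
      Nonempty ((G ≃g G) ≃* H) ∧
      Nat.card (G ≃g G) = Nat.card {σ : Equiv.Perm (Fin n) |
        Mperm n σ '' pointSet n G = pointSet n G} := by
  refine ⟨symSubgroup n G, rfl, ⟨autMulEquiv n G⟩, ?_⟩
  exact Nat.card_congr (autMulEquiv n G).toEquiv
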